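/- For every natural number n ≥ 5 and every index i : Fin n, the root s i, viewed inside the algebraic closure Ē of E, does not lie in solvableByRad F Ē. In other words, no root of the general monic polynomial of degree n ≥ 5 can be obtained from its coefficients by the field operations +, −, ×, ÷ together with successive extraction of m-th roots (the Abel–Ruffini theorem). -/

import Mathlib

open MvPolynomial

/-- `E n` is the field of rational functions in `n` variables over `ℚ`. -/
noncomputable abbrev E (n : ℕ) : Type :=
  FractionRing (MvPolynomial (Fin n) ℚ)

/-- `s n i` is the image in `E n` of the variable `X i`; these are the roots of the
general monic polynomial of degree `n`. -/
noncomputable def s (n : ℕ) (i : Fin n) : E n :=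
  algebraMap (MvPolynomial (Fin n) ℚ) (E n) (X i)

/-- `F n` is the subfield of `E n` generated by the images of the elementary symmetric
polynomials `e₁, …, eₙ`, i.e. by the coefficients of the general monic polynomial
`∏ i, (Y - s i)` of degree `n`. -/
noncomputable def F (n : ℕ) : Subfield (E n) :=
  Subfield.closure
    (Set.range fun k : Fin n =>
      algebraMap (MvPolynomial (Fin n) ℚ) (E n) (esymm (Fin n) ℚ ((k : ℕ) + 1)))

open Polynomial

namespace AR

variable (n : ℕ)

lemma s_injective : Function.Injective (s n) := fun i j h =>
  MvPolynomial.X_injective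
    (IsFractionRing.injective (MvPolynomial (Fin n) ℚ) (E n) h)

/-- The permutation action on `E n`. -/
noncomputable def permE (σ : Equiv.Perm (Fin n)) : E n ≃+* E n :=
  IsFractionRing.ringEquivOfRingEquiv (renameEquiv ℚ σ).toRingEquiv

@[simp] lemma permE_algebraMap (σ : Equiv.Perm (Fin n)) (p : MvPolynomial (Fin n) ℚ) :
    permE n σ (algebraMap _ (E n) p) = algebraMap _ (E n) (rename σ p) := by
  simp [permE]

/-- The fixed subfield of a field automorphism. -/
noncomputable def fixedSubfield (g : E n ≃+* E n) : Subfield (E n) where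
  carrier := {x | g x = x}
  mul_mem' := by intro a b ha hb; simp only [Set.mem_setOf_eq, map_mul] at *; rw [ha, hb]
  one_mem' := map_one g
  add_mem' := by intro a b ha hb; simp only [Set.mem_setOf_eq, map_add] at *; rw [ha, hb]
  zero_mem' := map_zero g
  neg_mem' := by intro a ha; simp only [Set.mem_setOf_eq, map_neg] at *; rw [ha]
  inv_mem' := by intro a ha; simp only [Set.mem_setOf_eq, map_inv₀] at *; rw [ha]

lemma permE_fixes (σ : Equiv.Perm (Fin n)) {x : E n} (hx : x ∈ F n) : permE n σ x = x := by
  have hle : F n ≤ fixedSubfield n (permE n σ) := by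
    rw [F]
    apply Subfield.closure_le.2
    rintro _ ⟨k, rfl⟩
    show permE n σ _ = _
    rw [permE_algebraMap, rename_esymm]
  exact hle hx

noncomputable def permAut (σ : Equiv.Perm (Fin n)) : E n ≃ₐ[F n] E n :=
  { permE n σ with commutes' := fun r => permE_fixes n σ r.2 }

@[simp] lemma permAut_apply (σ : Equiv.Perm (Fin n)) (x : E n) :
    permAut n σ x = permE n σ x := rfl

lemma permAut_s (σ : Equiv.Perm (Fin n)) (i : Fin n) :
    permAut n σ (s n i) = s n (σ i) := by
  rw [permAut_apply, s, permE_algebraMap, rename_X, s]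

lemma algEquiv_ext {g h : E n ≃ₐ[F n] E n}
    (H : ∀ p : MvPolynomial (Fin n) ℚ,
      g (algebraMap _ (E n) p) = h (algebraMap _ (E n) p)) : g = h := by
  have : (g : E n →+* E n) = (h : E n →+* E n) :=
    IsLocalization.ringHom_ext (nonZeroDivisors (MvPolynomial (Fin n) ℚ))
      (RingHom.ext H)
  exact AlgEquiv.ext fun x => RingHom.congr_fun this x

noncomputable def Φ : Equiv.Perm (Fin n) →* (E n ≃ₐ[F n] E n) :=
  MonoidHom.mk' (permAut n) fun σ τ => algEquiv_ext n fun p => by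
    simp only [AlgEquiv.mul_apply, permAut_apply, permE_algebraMap, rename_rename,
      Equiv.Perm.coe_mul]

lemma Φ_injective : Function.Injective (Φ n) := by
  intro σ τ h
  apply Equiv.ext
  intro j
  apply s_injective n
  have h1 : (Φ n σ) (s n j) = (Φ n τ) (s n j) := by rw [h]
  have h2 : (Φ n σ) (s n j) = s n (σ j) := permAut_s n σ j
  have h3 : (Φ n τ) (s n j) = s n (τ j) := permAut_s n τ j
  rw [h2, h3] at h1
  exact h1

/-- The general polynomial over `E n`. -/
noncomputable def fE : Polynomial (E n) :=
  ∏ j : Fin n, (Polynomial.X - Polynomial.C (s n j))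

lemma fE_monic : (fE n).Monic :=
  monic_prod_of_monic _ _ fun j _ => monic_X_sub_C _

lemma fE_natDegree : (fE n).natDegree = n := by
  rw [fE, natDegree_prod _ _ fun j _ => X_sub_C_ne_zero _]
  simp

lemma aeval_s_eq (p : MvPolynomial (Fin n) ℚ) :
    MvPolynomial.aeval (s n) p = algebraMap (MvPolynomial (Fin n) ℚ) (E n) p := by
  have : (MvPolynomial.aeval (s n) : MvPolynomial (Fin n) ℚ →ₐ[ℚ] E n) =
      IsScalarTower.toAlgHom ℚ (MvPolynomial (Fin n) ℚ) (E n) :=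
    MvPolynomial.algHom_ext fun i => by rw [MvPolynomial.aeval_X]; rfl
  exact DFunLike.congr_fun this p

lemma gen_mem (k : Fin n) :
    algebraMap (MvPolynomial (Fin n) ℚ) (E n) (esymm (Fin n) ℚ ((k : ℕ) + 1)) ∈ F n := by
  rw [F]
  exact Subfield.subset_closure ⟨k, rfl⟩

lemma esymm_mem {m : ℕ} (hm : m ≤ n) :
    algebraMap (MvPolynomial (Fin n) ℚ) (E n) (esymm (Fin n) ℚ m) ∈ F n := by
  rcases Nat.eq_zero_or_pos m with h0 | hpos
  · rw [h0, esymm_zero, map_one]; exact one_mem _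
  · have := gen_mem n ⟨m - 1, by omega⟩
    simpa [Nat.sub_add_cancel hpos] using this

lemma fE_coeff_mem (k : ℕ) : (fE n).coeff k ∈ F n := by
  by_cases hk : k ≤ n
  · have hcard : Multiset.card (Finset.univ.val.map (s n)) = n := by simp
    have hfe : fE n = ((Finset.univ.val.map (s n)).map fun t =>
        Polynomial.X - Polynomial.C t).prod := by
      rw [fE, Finset.prod_eq_multiset_prod, Multiset.map_map]
      rfl
    rw [hfe, Multiset.prod_X_sub_C_coeff _ (by rw [hcard]; exact hk), hcard]
    have hesymm : (Finset.univ.val.map (s n)).esymm (n - k) =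
        algebraMap (MvPolynomial (Fin n) ℚ) (E n) (esymm (Fin n) ℚ (n - k)) := by
      rw [← aeval_s_eq n (esymm (Fin n) ℚ (n - k)), MvPolynomial.aeval_esymm_eq_multiset_esymm]
    rw [hesymm]
    exact mul_mem (pow_mem (neg_mem (one_mem _)) _) (esymm_mem n (Nat.sub_le _ _))
  · rw [Polynomial.coeff_eq_zero_of_natDegree_lt (by rw [fE_natDegree]; omega)]
    exact zero_mem _

lemma fE_coeffs_subset : ((fE n).coeffs : Set (E n)) ⊆ ((F n).toSubring : Set (E n)) := by
  intro x hx
  obtain ⟨k, _, rfl⟩ := Polynomial.mem_coeffs_iff.mp hx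
  exact fE_coeff_mem n _

/-- The general polynomial as a polynomial over `F n`. -/
noncomputable def fF : Polynomial (F n) :=
  (fE n).toSubring (F n).toSubring (fE_coeffs_subset n)

lemma fF_map : (fF n).map (algebraMap (F n) (E n)) = fE n :=
  Polynomial.map_toSubring (fE n) (F n).toSubring (fE_coeffs_subset n)

lemma fF_monic : (fF n).Monic :=
  (Polynomial.monic_toSubring _ _ _).mpr (fE_monic n)

lemma fF_natDegree : (fF n).natDegree = n := by
  rw [fF, Polynomial.natDegree_toSubring, fE_natDegree]

lemma aeval_fF (j : Fin n) : Polynomial.aeval (s n j) (fF n) = 0 := by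
  rw [Polynomial.aeval_def, Polynomial.eval₂_eq_eval_map, fF_map, fE, Polynomial.eval_prod]
  exact Finset.prod_eq_zero (Finset.mem_univ j) (by simp)

lemma s_integral (j : Fin n) : IsIntegral (F n) (s n j) :=
  ⟨fF n, fF_monic n, by rw [← Polynomial.aeval_def]; exact aeval_fF n j⟩

lemma minpoly_eq (i : Fin n) : minpoly (F n) (s n i) = fF n := by
  have hdvd : minpoly (F n) (s n i) ∣ fF n := minpoly.dvd _ _ (aeval_fF n i)
  refine Polynomial.eq_of_dvd_of_natDegree_le_of_leadingCoeff hdvd ?_ ?_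
  · -- natDegree fF ≤ natDegree minpoly
    rw [fF_natDegree]
    have hmono : (minpoly (F n) (s n i)).Monic := minpoly.monic (s_integral n i)
    set p := minpoly (F n) (s n i) with hp
    have hroots : ∀ j : Fin n, s n j ∈ (p.map (algebraMap (F n) (E n))).roots := by
      intro j
      rw [Polynomial.mem_roots (hmono.map _).ne_zero, Polynomial.IsRoot, Polynomial.eval_map,
        ← Polynomial.aeval_def]
      have h1 : (permAut n (Equiv.swap i j)) (s n i) = s n j := by
        rw [permAut_s, Equiv.swap_apply_left]
      have h2 : Polynomial.aeval (s n j) p =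
          permAut n (Equiv.swap i j) (Polynomial.aeval (s n i) p) := by
        rw [← h1]
        exact Polynomial.aeval_algHom_apply
          ((permAut n (Equiv.swap i j) : E n ≃ₐ[F n] E n) : E n →ₐ[F n] E n) (s n i) p
      rw [h2, hp, minpoly.aeval, map_zero]
    have hle : (Finset.univ.val.map (s n)) ≤ (p.map (algebraMap (F n) (E n))).roots := by
      rw [Multiset.le_iff_subset (Finset.univ.nodup.map (s_injective n))]
      intro x hx
      obtain ⟨j, _, rfl⟩ := Multiset.mem_map.mp hx
      exact hroots j
    have hcard := Multiset.card_le_card hle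
    simp only [Multiset.card_map, Finset.card_val, Finset.card_univ, Fintype.card_fin] at hcard
    calc n ≤ Multiset.card (p.map (algebraMap (F n) (E n))).roots := hcard
      _ ≤ (p.map (algebraMap (F n) (E n))).natDegree := Polynomial.card_roots' _
      _ = p.natDegree := hmono.natDegree_map _
  · rw [(minpoly.monic (s_integral n i)).leadingCoeff, (fF_monic n).leadingCoeff]

lemma adjoin_s : IntermediateField.adjoin (F n) (Set.range (s n)) = ⊤ := by
  rw [eq_top_iff]
  have key : ∀ p : MvPolynomial (Fin n) ℚ,
      algebraMap (MvPolynomial (Fin n) ℚ) (E n) p ∈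
        IntermediateField.adjoin (F n) (Set.range (s n)) := by
    intro p
    induction p using MvPolynomial.induction_on with
    | C q =>
        have hq : algebraMap (MvPolynomial (Fin n) ℚ) (E n) (MvPolynomial.C q) = (q : E n) := by
          rw [← MvPolynomial.algebraMap_eq, ← IsScalarTower.algebraMap_apply]
          exact eq_ratCast _ q
        rw [hq]
        exact SubfieldClass.ratCast_mem _ q
    | add p q hp hq => rw [map_add]; exact add_mem hp hq
    | mul_X p i hp =>
        rw [map_mul]
        exact mul_mem hp (IntermediateField.subset_adjoin _ _ ⟨i, rfl⟩)
  rintro x -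
  obtain ⟨a, b, -, rfl⟩ := IsFractionRing.div_surjective (A := MvPolynomial (Fin n) ℚ) x
  exact div_mem (key a) (key b)

lemma isSplittingField : IsSplittingField (F n) (E n) (fF n) := by
  constructor
  · rw [fF_map, fE]
    exact Polynomial.Splits.prod fun j _ => Polynomial.Splits.X_sub_C _
  · have hsub : Set.range (s n) ⊆ (fF n).rootSet (E n) := by
      rintro _ ⟨j, rfl⟩
      rw [Polynomial.mem_rootSet']
      exact ⟨((fF_monic n).map _).ne_zero, aeval_fF n j⟩
    have halg : ∀ x ∈ (fF n).rootSet (E n), IsAlgebraic (F n) x := fun x hx =>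
      isAlgebraic_of_mem_rootSet hx
    rw [← IntermediateField.adjoin_toSubalgebra_of_isAlgebraic halg]
    have htop : IntermediateField.adjoin (F n) ((fF n).rootSet (E n)) = ⊤ :=
      eq_top_iff.2 (le_trans (le_of_eq (adjoin_s n).symm)
        (IntermediateField.adjoin.mono _ _ _ hsub))
    rw [htop, IntermediateField.top_toSubalgebra]

end AR

open Polynomial in
/-- **Abel–Ruffini theorem**: for `n ≥ 5`, no root of the general monic polynomial of
degree `n` lies in `solvableByRad F Ē`, i.e. no root can be obtained from the coefficients
by `+`, `-`, `×`, `÷` and extraction of `m`-th roots. -/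
theorem abel_ruffini (n : ℕ) (hn : 5 ≤ n) (i : Fin n) :
    algebraMap (E n) (AlgebraicClosure (E n)) (s n i) ∉
      solvableByRad (F n) (AlgebraicClosure (E n)) := by
  intro hmem
  have hirr : Irreducible (AR.fF n) :=
    AR.minpoly_eq n i ▸ minpoly.irreducible (AR.s_integral n i)
  have h0 : Polynomial.aeval (algebraMap (E n) (AlgebraicClosure (E n)) (s n i)) (AR.fF n) = 0 := by
    rw [Polynomial.aeval_algebraMap_apply, AR.aeval_fF, map_zero]
  haveI hsolv : Group.IsSolvable (AR.fF n).Gal := solvableByRad.isSolvable' hmem hirr h0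
  haveI := AR.isSplittingField n
  have e : (E n ≃ₐ[F n] E n) ≃* (AR.fF n).Gal :=
    (Polynomial.IsSplittingField.algEquiv (E n) (AR.fF n)).autCongr
  haveI : Group.IsSolvable (E n ≃ₐ[F n] E n) :=
    solvable_of_solvable_injective (f := e.toMonoidHom) e.injective
  haveI : Group.IsSolvable (Equiv.Perm (Fin n)) :=
    solvable_of_solvable_injective (AR.Φ_injective n)
  exact Equiv.Perm.not_solvable (Fin n)
    (by rw [Cardinal.mk_fin]; exact_mod_cast hn) this
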